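/- The restriction γ̂1 := γ1|N1 of the boundary map of order 1 to N1 = ker(dδ+1) is a unitary map from N1 (with graph norm of δ) onto G^{1/2} (with the intrinsic norm ‖φ‖_{G^{1/2}} = ‖(γ̂0)^{-1}φ‖_{H0^1}). -/

import Mathlib

open scoped InnerProductSpace
open ContinuousLinearMap

theorem statement_7
    {H0 H1 G H01 H11 : Type*}
    [NormedAddCommGroup H0] [InnerProductSpace ℂ H0] [CompleteSpace H0]
    [NormedAddCommGroup H1] [InnerProductSpace ℂ H1] [CompleteSpace H1]
    [NormedAddCommGroup G] [InnerProductSpace ℂ G] [CompleteSpace G]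
    [NormedAddCommGroup H01] [InnerProductSpace ℂ H01] [CompleteSpace H01]
    [NormedAddCommGroup H11] [InnerProductSpace ℂ H11] [CompleteSpace H11]
    (ι0 : H01 →L[ℂ] H0) (d : H01 →L[ℂ] H1) (γ0 : H01 →L[ℂ] G)
    (ι1 : H11 →L[ℂ] H1) (δ : H11 →L[ℂ] H0)
    (hι0 : Function.Injective ι0) (hι1 : Function.Injective ι1)
    (hgraph0 : ∀ f g : H01, ⟪f, g⟫_ℂ = ⟪ι0 f, ι0 g⟫_ℂ + ⟪d f, d g⟫_ℂ)
    (hgraph1 : ∀ f g : H11, ⟪f, g⟫_ℂ = ⟪ι1 f, ι1 g⟫_ℂ + ⟪δ f, δ g⟫_ℂ)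
    (hdom : Dense (Set.range ι0))
    (hker : Dense (ι0 '' {f : H01 | γ0 f = 0}))
    (hran : Dense (Set.range γ0))
    (hadj1 : ∀ (g : H11) (f : H01), γ0 f = 0 → ⟪d f, ι1 g⟫_ℂ = ⟪ι0 f, δ g⟫_ℂ)
    (hadj2 : ∀ (g1 : H1) (h0 : H0),
      (∀ f : H01, γ0 f = 0 → ⟪d f, g1⟫_ℂ = ⟪ι0 f, h0⟫_ℂ) →
      ∃ g : H11, ι1 g = g1 ∧ δ g = h0)
    (γ1 : H11 →L[ℂ] G)
    (hγ1K : ∀ g : H11, (∀ f : H01, ⟪d f, ι1 g⟫_ℂ = ⟪ι0 f, δ g⟫_ℂ) → γ1 g = 0)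
    (hγ1N : ∀ (g : H11) (n : H01),
      (∃ h : H01, ι0 h = δ g ∧ d h = -(ι1 g)) → ι0 n = δ g → γ1 g = -(γ0 n))
    : (∀ g g' : H11, (∃ h : H01, ι0 h = δ g ∧ d h = -(ι1 g)) →
        (∃ h : H01, ι0 h = δ g' ∧ d h = -(ι1 g')) → γ1 g = γ1 g' → g = g') ∧
      (∀ g : H11, (∃ h : H01, ι0 h = δ g ∧ d h = -(ι1 g)) →
        γ1 g ∈ Set.range γ0 ∧
        ∀ n : H01, (∃ g' : H11, ι1 g' = d n ∧ δ g' = -(ι0 n)) →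
          γ0 n = γ1 g → ‖n‖ = ‖g‖) ∧
      (∀ φ ∈ Set.range γ0, ∃ g : H11,
        (∃ h : H01, ι0 h = δ g ∧ d h = -(ι1 g)) ∧ γ1 g = φ) := by
  -- N0 membership: an element h with a witness g and γ0 h = 0 is zero
  have hN0zero : ∀ h : H01, (∃ g : H11, ι1 g = d h ∧ δ g = -(ι0 h)) → γ0 h = 0 → h = 0 := by
    rintro h ⟨g, hg1, hg2⟩ h0
    have key := hadj1 g h h0
    rw [hg1, hg2] at key
    have : (⟪h, h⟫_ℂ) = 0 := by
      rw [hgraph0, key, inner_neg_right]; ring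
    exact inner_self_eq_zero.mp this
  -- injectivity of γ0 on N0
  have hN0inj : ∀ h h' : H01, (∃ g : H11, ι1 g = d h ∧ δ g = -(ι0 h)) →
      (∃ g : H11, ι1 g = d h' ∧ δ g = -(ι0 h')) → γ0 h = γ0 h' → h = h' := by
    rintro h h' ⟨g, hg1, hg2⟩ ⟨g', hg1', hg2'⟩ heq
    have : h - h' = 0 := by
      refine hN0zero (h - h') ⟨g - g', ?_, ?_⟩ (by simp [heq])
      · simp [map_sub, hg1, hg1']
      · simp [map_sub, hg2, hg2']; abel
    exact sub_eq_zero.mp this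
  refine ⟨?_, ?_, ?_⟩
  · -- injectivity of γ1 on N1
    rintro g g' ⟨h, hh1, hh2⟩ ⟨h', hh1', hh2'⟩ heq
    have e1 : γ1 g = -(γ0 h) := hγ1N g h ⟨h, hh1, hh2⟩ hh1
    have e2 : γ1 g' = -(γ0 h') := hγ1N g' h' ⟨h', hh1', hh2'⟩ hh1'
    have hγeq : γ0 h = γ0 h' := by
      have := e1 ▸ e2 ▸ heq; exact neg_inj.mp this
    have hhN0 : ∃ gg : H11, ι1 gg = d h ∧ δ gg = -(ι0 h) :=
      ⟨-g, by simp [hh2], by simp [hh1]⟩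
    have hh'N0 : ∃ gg : H11, ι1 gg = d h' ∧ δ gg = -(ι0 h') :=
      ⟨-g', by simp [hh2'], by simp [hh1']⟩
    have hhh : h = h' := hN0inj h h' hhN0 hh'N0 hγeq
    apply hι1
    have : d h = d h' := by rw [hhh]
    rw [hh2, hh2'] at this
    exact neg_inj.mp this
  · -- range and isometry
    rintro g ⟨h, hh1, hh2⟩
    have e1 : γ1 g = -(γ0 h) := hγ1N g h ⟨h, hh1, hh2⟩ hh1
    constructor
    · exact ⟨-h, by simp [e1]⟩
    · rintro n ⟨g', hg1', hg2'⟩ hγn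
      -- -h ∈ N0 with witness g
      have hnegh : ∃ gg : H11, ι1 gg = d (-h) ∧ δ gg = -(ι0 (-h)) :=
        ⟨g, by simp [hh2], by simp [hh1]⟩
      have hn : n = -h := by
        refine hN0inj n (-h) ⟨g', hg1', hg2'⟩ hnegh ?_
        rw [hγn, e1]; simp
      have hinner : (⟪n, n⟫_ℂ) = ⟪g, g⟫_ℂ := by
        rw [hn, hgraph0, hgraph1]
        simp only [map_neg, inner_neg_neg]
        rw [hh1, hh2]
        simp [inner_neg_neg]; ring
      have h1 : (‖n‖ : ℝ) ^ 2 = ‖g‖ ^ 2 := by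
        have := congrArg Complex.re hinner
        rwa [← @inner_self_eq_norm_sq ℂ, ← @inner_self_eq_norm_sq ℂ]
      nlinarith [norm_nonneg n, norm_nonneg g]
  · -- surjectivity
    rintro φ ⟨f, rfl⟩
    set K : Submodule ℂ H01 := LinearMap.ker (γ0 : H01 →ₗ[ℂ] G) with hK
    haveI : CompleteSpace K := (ContinuousLinearMap.isClosed_ker γ0).completeSpace_coe
    obtain ⟨y, hy, z, hz, hsum⟩ := K.exists_add_mem_mem_orthogonal (-f)
    have hγz : γ0 z = -(γ0 f) := by
      have hy0 : γ0 y = 0 := hy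
      have : γ0 (-f) = γ0 y + γ0 z := by rw [hsum, map_add]
      rw [map_neg, hy0, zero_add] at this
      exact this.symm
    -- z ∈ N0
    have hzN0 : ∃ gg : H11, ι1 gg = d z ∧ δ gg = -(ι0 z) := by
      apply hadj2
      intro u hu
      have horth : (⟪u, z⟫_ℂ) = 0 := hz u hu
      rw [hgraph0] at horth
      rw [inner_neg_right]
      linear_combination horth
    obtain ⟨g, hg1, hg2⟩ := hzN0
    refine ⟨-g, ⟨z, ?_, ?_⟩, ?_⟩
    · simp [hg2]
    · simp [hg1]
    · have := hγ1N (-g) z ⟨z, by simp [hg2], by simp [hg1]⟩ (by simp [hg2])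
      rw [this, hγz]; simp
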